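/- Let δ = (x-(α+1))D - xD^2 and suppose δ(δ-1)(δ-2)⋯(δ-(n-1)) = Σ_{k=n}^{2n} q_k(x) D^k as operators on ℝ[x], where the q_k are polynomials. Then Σ_{k=n}^{2n} q_k(x) z^k = n!·(-1)^n·z^n·L_n^{(α)}(x - xz) as polynomials in x and z. -/

import Mathlib

open Polynomial

/-- The generalized Laguerre polynomial `L_n^{(α)}(x) = ∑_{k=0}^n binom(n+α, n-k) (-x)^k / k!`. -/
noncomputable def Laguerre (α : ℝ) (n : ℕ) : Polynomial ℝ :=
  ∑ k ∈ Finset.range (n + 1),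
    Polynomial.C ((∏ i ∈ Finset.range (n - k), ((n : ℝ) + α - i)) / (Nat.factorial (n - k)) *
      (-1) ^ k / (Nat.factorial k)) * Polynomial.X ^ k

/-- The operator `δ[p] = (x-(α+1))p' - x p''`. -/
noncomputable def laguerreDelta (α : ℝ) (p : Polynomial ℝ) : Polynomial ℝ :=
  (X - C (α + 1)) * derivative p - X * derivative (derivative p)

/-- The operator `(δ-(m-1))⋯(δ-1)δ` (which equals `δ(δ-1)⋯(δ-(m-1))` since the factors
commute). -/
noncomputable def laguerreDeltaFalling (α : ℝ) : ℕ → Polynomial ℝ → Polynomial ℝ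
  | 0, p => p
  | (m + 1), p =>
      laguerreDelta α (laguerreDeltaFalling α m p) - (m : ℝ) • laguerreDeltaFalling α m p

namespace LagAux

noncomputable abbrev RR := Polynomial (Polynomial ℝ)

/-- coefficient-wise derivative (∂/∂x on (ℝ[x])[z]) -/
noncomputable def dX (P : RR) : RR := P.sum fun n c => monomial n (derivative c)

lemma dX_add (P Q : RR) : dX (P + Q) = dX P + dX Q := by
  unfold dX
  rw [Polynomial.sum_add_index]
  · intro i; simp
  · intro a b₁ b₂; simp [map_add]

lemma dX_monomial (n : ℕ) (c : Polynomial ℝ) : dX (monomial n c) = monomial n (derivative c) := by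
  unfold dX; rw [Polynomial.sum_monomial_index]; simp

lemma dX_mul (P Q : RR) : dX (P * Q) = dX P * Q + P * dX Q := by
  induction P using Polynomial.induction_on' with
  | add p q hp hq =>
    rw [add_mul, dX_add, hp, hq, dX_add]; ring
  | monomial j a =>
    induction Q using Polynomial.induction_on' with
    | add p q hp hq =>
      rw [mul_add, dX_add, hp, hq, dX_add]; ring
    | monomial k b =>
      rw [monomial_mul_monomial, dX_monomial, dX_monomial, dX_monomial,
        derivative_mul, monomial_mul_monomial, monomial_mul_monomial, map_add]

lemma dX_C (q : Polynomial ℝ) : dX (C q) = C (derivative q) := by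
  rw [← monomial_zero_left, dX_monomial, monomial_zero_left]

lemma dX_CC (r : ℝ) : dX (C (C r)) = 0 := by rw [dX_C]; simp

lemma dX_X : dX (X : RR) = 0 := by
  rw [← monomial_one_one_eq_X, dX_monomial]; simp

lemma dX_X_pow (m : ℕ) : dX ((X : RR) ^ m) = 0 := by
  rw [← monomial_one_right_eq_X_pow, dX_monomial]; simp

lemma dX_one : dX (1 : RR) = 0 := by rw [← map_one C, dX_C]; simp

lemma dX_aeval (v : RR) (Q : Polynomial ℝ) :
    dX (aeval v Q) = aeval v (derivative Q) * dX v := by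
  induction Q using Polynomial.induction_on' with
  | add p q hp hq => simp only [map_add, dX_add, hp, hq]; ring
  | monomial k a =>
    induction k with
    | zero =>
      simp only [monomial_zero_left, aeval_C, derivative_C, map_zero, zero_mul]
      exact dX_CC a
    | succ j ih =>
      rw [show (monomial (j+1) a : Polynomial ℝ) = monomial j a * X from (monomial_mul_X j a).symm,
        map_mul, dX_mul, aeval_X, ih, derivative_mul, derivative_X, mul_one, map_add, map_mul, aeval_X]
      ring

/-- apply the operator with symbol `P` to `p` -/
noncomputable def ap (P : RR) (p : Polynomial ℝ) : Polynomial ℝ :=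
  P.sum fun k c => c * derivative^[k] p

lemma ap_add (P Q : RR) (p : Polynomial ℝ) : ap (P + Q) p = ap P p + ap Q p := by
  unfold ap
  rw [Polynomial.sum_add_index]
  · intro i; simp
  · intro a b₁ b₂; rw [add_mul]

lemma ap_monomial (k : ℕ) (c : Polynomial ℝ) (p : Polynomial ℝ) :
    ap (monomial k c) p = c * derivative^[k] p := by
  unfold ap; rw [Polynomial.sum_monomial_index]; simp

lemma ap_Cmul (r : Polynomial ℝ) (P : RR) (p : Polynomial ℝ) :
    ap (C r * P) p = r * ap P p := by
  induction P using Polynomial.induction_on' with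
  | add p' q' hp hq => rw [mul_add, ap_add, hp, hq, ap_add, mul_add]
  | monomial k c => rw [C_mul_monomial, ap_monomial, ap_monomial, mul_assoc]

lemma ap_one (p : Polynomial ℝ) : ap 1 p = p := by
  rw [show (1 : RR) = monomial 0 1 from (monomial_zero_one).symm, ap_monomial]
  simp

lemma ap_sub (P Q : RR) (p : Polynomial ℝ) : ap (P - Q) p = ap P p - ap Q p := by
  have : P - Q = P + C (-1) * Q := by rw [map_neg, map_one]; ring
  rw [this, ap_add, ap_Cmul]; ring

lemma derivative_ap (P : RR) (p : Polynomial ℝ) :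
    derivative (ap P p) = ap (dX P + X * P) p := by
  induction P using Polynomial.induction_on' with
  | add p' q' hp hq =>
    rw [dX_add,
      show dX p' + dX q' + X * (p' + q') = (dX p' + X * p') + (dX q' + X * q') by ring,
      ap_add (dX p' + X * p'), ap_add, derivative_add, hp, hq]
  | monomial k c =>
    rw [ap_monomial, derivative_mul, dX_monomial, X_mul_monomial, ap_add, ap_monomial,
      ap_monomial, Function.iterate_succ_apply']

noncomputable def Tsym (α : ℝ) (P : RR) : RR :=
  C (X - C (α + 1)) * (dX P + X * P)
    - C X * (dX (dX P) + 2 * (X * dX P) + X ^ 2 * P)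

lemma ap_Tsym (α : ℝ) (P : RR) (p : Polynomial ℝ) :
    ap (Tsym α P) p = laguerreDelta α (ap P p) := by
  unfold Tsym laguerreDelta
  rw [derivative_ap, derivative_ap]
  have h2 : dX (dX P + X * P) + X * (dX P + X * P)
      = (dX (dX P) + 2 * (X * dX P) + X ^ 2 * P) := by
    rw [dX_add, dX_mul, dX_X]; ring
  rw [h2, ap_sub, ap_Cmul, ap_Cmul]

noncomputable def lcoef (α : ℝ) (n k : ℕ) : ℝ :=
  if k ≤ n then (∏ i ∈ Finset.range (n - k), ((n : ℝ) + α - i)) / (Nat.factorial (n - k)) *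
      (-1) ^ k / (Nat.factorial k) else 0

lemma Laguerre_coeff (α : ℝ) (n k : ℕ) : (Laguerre α n).coeff k = lcoef α n k := by
  unfold Laguerre lcoef
  rw [finset_sum_coeff]
  simp only [coeff_C_mul, coeff_X_pow, mul_ite, mul_one, mul_zero]
  rw [Finset.sum_ite_eq (Finset.range (n + 1))]
  simp [Finset.mem_range, Nat.lt_succ_iff]

lemma core1 (α : ℝ) (m k : ℕ) :
    ((k : ℝ) + 1) * (((k : ℝ) + 1) + α) * lcoef α m (k + 1) = ((k : ℝ) - m) * lcoef α m k := by
  unfold lcoef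
  by_cases h1 : k + 1 ≤ m
  · have hk : k ≤ m := le_trans (Nat.le_succ k) h1
    rw [if_pos h1, if_pos hk]
    obtain ⟨t, rfl⟩ := Nat.exists_eq_add_of_le h1
    have e1 : k + 1 + t - (k + 1) = t := by omega
    have e2 : k + 1 + t - k = t + 1 := by omega
    rw [e1, e2, Finset.prod_range_succ]
    push_cast
    rw [Nat.factorial_succ, Nat.factorial_succ]
    push_cast
    field_simp
    ring
  · by_cases hk : k ≤ m
    · have : k = m := by omega
      subst this
      rw [if_neg h1, if_pos hk]
      ring
    · rw [if_neg h1, if_neg hk]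
      ring

lemma core2a (α : ℝ) (m : ℕ) :
    ((m : ℝ) + 1) * lcoef α (m + 1) 0 = ((m : ℝ) + α + 1) * lcoef α m 0 := by
  unfold lcoef
  rw [if_pos (Nat.zero_le _), if_pos (Nat.zero_le _)]
  simp only [Nat.sub_zero]
  have hp : ∏ i ∈ Finset.range (m + 1), (((m + 1 : ℕ) : ℝ) + α - (i : ℕ)) =
      ((m : ℝ) + 1 + α) * ∏ i ∈ Finset.range m, ((m : ℝ) + α - (i : ℕ)) := by
    rw [Finset.prod_range_succ']
    have h : ∀ i ∈ Finset.range m,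
        (((m + 1 : ℕ) : ℝ) + α - ((i + 1 : ℕ) : ℝ)) = ((m : ℝ) + α - (i : ℕ)) := by
      intro i _; push_cast; ring
    rw [Finset.prod_congr rfl h]
    push_cast; ring
  rw [hp, Nat.factorial_succ]
  push_cast
  field_simp
  ring

lemma core2b (α : ℝ) (m k : ℕ) :
    ((m : ℝ) + 1) * lcoef α (m + 1) (k + 1) =
      (((k : ℝ) + 1) + ((m : ℝ) + α + 1)) * lcoef α m (k + 1) - lcoef α m k := by
  unfold lcoef
  by_cases h1 : k + 1 ≤ m
  · have hk : k ≤ m := le_trans (Nat.le_succ k) h1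
    have h2 : k + 1 ≤ m + 1 := le_trans h1 (Nat.le_succ m)
    rw [if_pos h1, if_pos hk, if_pos h2]
    obtain ⟨t, rfl⟩ := Nat.exists_eq_add_of_le h1
    have e1 : k + 1 + t - (k + 1) = t := by omega
    have e2 : k + 1 + t - k = t + 1 := by omega
    have e3 : k + 1 + t + 1 - (k + 1) = t + 1 := by omega
    rw [e1, e2, e3]
    have hp : ∏ i ∈ Finset.range (t + 1), (((k + 1 + t + 1 : ℕ) : ℝ) + α - (i : ℕ)) =
        (((k + 1 + t : ℕ) : ℝ) + 1 + α) *
          ∏ i ∈ Finset.range t, (((k + 1 + t : ℕ) : ℝ) + α - (i : ℕ)) := by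
      rw [Finset.prod_range_succ']
      have h : ∀ i ∈ Finset.range t,
          (((k + 1 + t + 1 : ℕ) : ℝ) + α - ((i + 1 : ℕ) : ℝ)) =
            (((k + 1 + t : ℕ) : ℝ) + α - (i : ℕ)) := by
        intro i _; push_cast; ring
      rw [Finset.prod_congr rfl h]
      push_cast; ring
    have hq : ∏ i ∈ Finset.range (t + 1), (((k + 1 + t : ℕ) : ℝ) + α - (i : ℕ)) =
        (∏ i ∈ Finset.range t, (((k + 1 + t : ℕ) : ℝ) + α - (i : ℕ))) * ((k : ℝ) + 1 + α) := by
      rw [Finset.prod_range_succ]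
      congr 1
      push_cast; ring
    rw [hp, hq, Nat.factorial_succ t, Nat.factorial_succ k]
    push_cast
    field_simp
    ring
  · by_cases hk : k ≤ m
    · have : k = m := by omega
      subst this
      have h2 : k + 1 ≤ k + 1 := le_refl _
      rw [if_neg h1, if_pos hk, if_pos h2]
      simp only [Nat.add_sub_cancel, Nat.sub_self]
      rw [Nat.factorial_succ]
      push_cast
      field_simp
      ring
    · have h2 : ¬ (k + 1 ≤ m + 1) := by omega
      rw [if_neg h1, if_neg hk, if_neg h2]
      ring

lemma laguerre_ode (α : ℝ) (m : ℕ) :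
    X * derivative (derivative (Laguerre α m)) + (C (α + 1) - X) * derivative (Laguerre α m)
      + C ((m : ℝ)) * Laguerre α m = 0 := by
  ext k
  simp only [coeff_add, coeff_zero, sub_mul, coeff_sub, coeff_C_mul]
  cases k with
  | zero =>
    simp only [mul_coeff_zero, coeff_X_zero, zero_mul, coeff_derivative, Laguerre_coeff]
    have := core1 α m 0
    push_cast at this ⊢
    linarith [this]
  | succ j =>
    rw [coeff_X_mul, coeff_X_mul, coeff_derivative, coeff_derivative, coeff_derivative]
    simp only [Laguerre_coeff]
    have h1 := core1 α m (j + 1)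
    push_cast at h1 ⊢
    linear_combination h1

lemma laguerre_rec (α : ℝ) (m : ℕ) :
    C ((m : ℝ) + 1) * Laguerre α (m + 1) =
      X * derivative (Laguerre α m) + (C ((m : ℝ) + α + 1) - X) * Laguerre α m := by
  ext k
  simp only [coeff_add, coeff_sub, coeff_C_mul, sub_mul]
  cases k with
  | zero =>
    simp only [mul_coeff_zero, coeff_X_zero, zero_mul, Laguerre_coeff]
    have := core2a α m
    push_cast at this ⊢
    linarith [this]
  | succ j =>
    rw [coeff_X_mul, coeff_X_mul, coeff_derivative]
    simp only [Laguerre_coeff]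
    have h1 := core2b α m j
    push_cast at h1 ⊢
    linear_combination h1

/-- the symbol of `δ(δ-1)⋯(δ-(m-1))` -/
noncomputable def Rsym (α : ℝ) (m : ℕ) : RR :=
  C (C ((Nat.factorial m : ℝ) * (-1) ^ m)) * X ^ m *
    aeval (C (X : Polynomial ℝ) - C (X : Polynomial ℝ) * X) (Laguerre α m)

lemma Laguerre_zero (α : ℝ) : Laguerre α 0 = 1 := by
  unfold Laguerre
  simp

lemma Rsym_zero (α : ℝ) : Rsym α 0 = 1 := by
  unfold Rsym
  rw [Laguerre_zero]
  simp

lemma dX_v : dX (C (X : Polynomial ℝ) - C (X : Polynomial ℝ) * X) = 1 - X := by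
  have h : C (X : Polynomial ℝ) - C (X : Polynomial ℝ) * X
      = C (X : Polynomial ℝ) + C (-(X : Polynomial ℝ)) * X := by
    rw [map_neg]; ring
  rw [h, dX_add, dX_mul, dX_X, dX_C, dX_C]
  simp
  ring

lemma Rsym_step (α : ℝ) (m : ℕ) :
    Rsym α (m + 1) = Tsym α (Rsym α m) - C (C ((m : ℝ))) * Rsym α m := by
  set v : RR := C (X : Polynomial ℝ) - C (X : Polynomial ℝ) * X with hv
  set G : RR := aeval v (Laguerre α m) with hG
  set G1 : RR := aeval v (derivative (Laguerre α m)) with hG1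
  set G2 : RR := aeval v (derivative (derivative (Laguerre α m))) with hG2
  have hdG : dX G = G1 * (1 - X) := by rw [hG, dX_aeval, dX_v, ← hG1]
  have hdG1 : dX G1 = G2 * (1 - X) := by rw [hG1, dX_aeval, dX_v, ← hG2]
  have hODE : v * G2 + (C (C (α + 1)) - v) * G1 + C (C ((m : ℝ))) * G = 0 := by
    have := congrArg (aeval v) (laguerre_ode α m)
    simpa only [map_add, map_mul, map_sub, map_zero, aeval_X, aeval_C, algebraMap_eq, Polynomial.algebraMap_apply,
      ← hG, ← hG1, ← hG2] using this
  have hREC : C (C ((m : ℝ) + 1)) * aeval v (Laguerre α (m + 1)) =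
      v * G1 + (C (C ((m : ℝ) + α + 1)) - v) * G := by
    have := congrArg (aeval v) (laguerre_rec α m)
    simpa only [map_add, map_mul, map_sub, aeval_X, aeval_C, algebraMap_eq, Polynomial.algebraMap_apply,
      ← hG, ← hG1] using this
  unfold Rsym Tsym
  rw [← hv, ← hG]
  have hd1 : dX (C (C ((Nat.factorial m : ℝ) * (-1) ^ m)) * X ^ m * G)
      = C (C ((Nat.factorial m : ℝ) * (-1) ^ m)) * X ^ m * (G1 * (1 - X)) := by
    rw [dX_mul, dX_mul, dX_CC, dX_X_pow, hdG]
    ring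
  have hd2 : dX (C (C ((Nat.factorial m : ℝ) * (-1) ^ m)) * X ^ m * (G1 * (1 - X)))
      = C (C ((Nat.factorial m : ℝ) * (-1) ^ m)) * X ^ m * (G2 * (1 - X) * (1 - X)) := by
    rw [dX_mul, dX_mul, dX_CC, dX_X_pow, dX_mul, hdG1]
    have : dX (1 - X) = 0 := by
      rw [sub_eq_add_neg, dX_add, dX_one, show (-X : RR) = C (-1) * X by rw [map_neg, map_one]; ring,
        dX_mul, dX_X, dX_C]
      simp
    rw [this]
    ring
  rw [hd1, hd2]
  have hc : ((Nat.factorial (m + 1) : ℝ) * (-1) ^ (m + 1))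
      = -(((m : ℝ) + 1) * ((Nat.factorial m : ℝ) * (-1) ^ m)) := by
    rw [Nat.factorial_succ]
    push_cast
    ring
  rw [hc]
  simp only [map_neg, map_mul, map_add, map_sub, map_pow, map_one, map_natCast] at hODE hREC ⊢
  linear_combination ((Nat.factorial m : RR) * (-1 : RR) ^ m * X ^ m * (1 - X)) * hODE -
    ((Nat.factorial m : RR) * (-1 : RR) ^ m * X ^ (m + 1)) * hREC

lemma deltaFalling_eq_ap (α : ℝ) (m : ℕ) (p : Polynomial ℝ) :
    laguerreDeltaFalling α m p = ap (Rsym α m) p := by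
  induction m with
  | zero => rw [Rsym_zero, ap_one]; rfl
  | succ m ih =>
    show laguerreDelta α (laguerreDeltaFalling α m p) - (m : ℝ) • laguerreDeltaFalling α m p = _
    rw [ih, ← ap_Tsym, Polynomial.smul_eq_C_mul, ← ap_Cmul, ← ap_sub, ← Rsym_step]


lemma natDegree_v_le : (C (X : Polynomial ℝ) - C (X : Polynomial ℝ) * X : RR).natDegree ≤ 1 := by
  apply le_trans (natDegree_sub_le _ _)
  apply max_le
  · simp
  · apply le_trans (natDegree_mul_le)
    simp

lemma algebraMap_RR (r : ℝ) : (algebraMap ℝ RR) r = C (C r) := rfl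

lemma natDegree_aeval_le (α : ℝ) (n : ℕ) :
    (aeval (C (X : Polynomial ℝ) - C (X : Polynomial ℝ) * X) (Laguerre α n) : RR).natDegree ≤ n := by
  unfold Laguerre
  rw [map_sum]
  apply Polynomial.natDegree_sum_le_of_forall_le
  intro k hk
  simp only [map_mul, map_pow, aeval_C, aeval_X, algebraMap_RR]
  apply le_trans (natDegree_mul_le)
  rw [natDegree_C, zero_add]
  apply le_trans (natDegree_pow_le)
  calc k * (C (X : Polynomial ℝ) - C (X : Polynomial ℝ) * X : RR).natDegree
      ≤ k * 1 := Nat.mul_le_mul_left k natDegree_v_le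
    _ = k := mul_one k
    _ ≤ n := by have := Finset.mem_range.mp hk; omega

lemma Rsym_natDegree_le (α : ℝ) (n : ℕ) : (Rsym α n).natDegree ≤ 2 * n := by
  unfold Rsym
  apply le_trans (natDegree_mul_le)
  have h1 : (C (C ((Nat.factorial n : ℝ) * (-1) ^ n)) * (X : RR) ^ n).natDegree ≤ n := by
    apply le_trans (natDegree_mul_le)
    rw [natDegree_C, natDegree_X_pow, zero_add]
  have := natDegree_aeval_le α n
  omega

lemma Rsym_coeff_eq_zero (α : ℝ) (n k : ℕ) (hk : k < n) : (Rsym α n).coeff k = 0 := by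
  unfold Rsym
  rw [show C (C ((Nat.factorial n : ℝ) * (-1) ^ n)) * (X : RR) ^ n *
      aeval (C (X : Polynomial ℝ) - C (X : Polynomial ℝ) * X) (Laguerre α n)
    = (C (C ((Nat.factorial n : ℝ) * (-1) ^ n)) *
      aeval (C (X : Polynomial ℝ) - C (X : Polynomial ℝ) * X) (Laguerre α n)) * X ^ n by ring]
  rw [coeff_mul_X_pow']
  rw [if_neg (by omega)]

lemma Rsym_support_subset (α : ℝ) (n : ℕ) :
    (Rsym α n).support ⊆ Finset.Icc n (2 * n) := by
  intro k hk
  rw [mem_support_iff] at hk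
  rw [Finset.mem_Icc]
  constructor
  · by_contra h
    exact hk (Rsym_coeff_eq_zero α n k (by omega))
  · by_contra h
    exact hk (coeff_eq_zero_of_natDegree_lt (lt_of_le_of_lt (Rsym_natDegree_le α n) (by omega)))

lemma ap_Rsym_eq (α : ℝ) (n : ℕ) (p : Polynomial ℝ) :
    ap (Rsym α n) p = ∑ k ∈ Finset.Icc n (2 * n), (Rsym α n).coeff k * derivative^[k] p := by
  unfold ap
  rw [Polynomial.sum_def]
  apply Finset.sum_subset (Rsym_support_subset α n)
  intro k _ hk
  rw [notMem_support_iff.mp hk, zero_mul]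

end LagAux

open LagAux in
theorem deltaFalling_symbol (α : ℝ) (n : ℕ) (hn : 1 ≤ n) (q : ℕ → Polynomial ℝ)
    (hq : ∀ p : Polynomial ℝ,
      laguerreDeltaFalling α n p = ∑ k ∈ Finset.Icc n (2 * n), q k * derivative^[k] p) :
    ∑ k ∈ Finset.Icc n (2 * n), (Polynomial.C (q k)) * (X : Polynomial (Polynomial ℝ)) ^ k =
      Polynomial.C (Polynomial.C ((Nat.factorial n : ℝ) * (-1) ^ n)) *
        (X : Polynomial (Polynomial ℝ)) ^ n *
        Polynomial.aeval (Polynomial.C (X : Polynomial ℝ) -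
          Polynomial.C (X : Polynomial ℝ) * X) (Laguerre α n) := by
  have hdiff : ∀ p : Polynomial ℝ,
      ∑ k ∈ Finset.Icc n (2 * n), (q k - (Rsym α n).coeff k) * derivative^[k] p = 0 := by
    intro p
    have h1 := hq p
    have h2 := (deltaFalling_eq_ap α n p).symm.trans (hq p)
    rw [ap_Rsym_eq] at h2
    simp only [sub_mul]
    rw [Finset.sum_sub_distrib, h2, sub_self]
  have key : ∀ K : ℕ, ∀ j ∈ Finset.Icc n (2 * n), j < K → q j = (Rsym α n).coeff j := by
    intro K
    induction K with
    | zero => intro j _ h; omega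
    | succ K ih =>
      intro j hj hjK
      rcases Nat.lt_succ_iff_lt_or_eq.mp hjK with h | rfl
      · exact ih j hj h
      have hd := hdiff (X ^ j)
      rw [Finset.sum_eq_single j] at hd
      · rw [Polynomial.iterate_derivative_X_pow_eq_smul, Nat.sub_self, pow_zero,
          Nat.descFactorial_self, Polynomial.smul_eq_C_mul, mul_one] at hd
        rcases mul_eq_zero.mp hd with h2 | h2
        · exact sub_eq_zero.mp h2
        · exfalso
          rw [Polynomial.C_eq_zero] at h2
          exact Nat.cast_ne_zero.mpr (Nat.factorial_ne_zero j) h2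
      · intro i hi hij
        rcases lt_or_gt_of_ne hij with h | h
        · rw [ih i hi h, sub_self, zero_mul]
        · rw [Polynomial.iterate_derivative_X_pow_eq_smul,
            Nat.descFactorial_eq_zero_iff_lt.mpr h]
          simp
      · intro h
        exact absurd hj h
  have hqc : ∀ k ∈ Finset.Icc n (2 * n), q k = (Rsym α n).coeff k := by
    intro k hk
    exact key (k + 1) k hk (Nat.lt_succ_self k)
  calc ∑ k ∈ Finset.Icc n (2 * n), (Polynomial.C (q k)) * (X : RR) ^ k
      = ∑ k ∈ Finset.Icc n (2 * n), (Polynomial.C ((Rsym α n).coeff k)) * (X : RR) ^ k := by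
        apply Finset.sum_congr rfl
        intro k hk
        rw [hqc k hk]
    _ = ∑ k ∈ Finset.range (2 * n + 1), (Polynomial.C ((Rsym α n).coeff k)) * (X : RR) ^ k := by
        apply Finset.sum_subset
        · intro k hk
          rw [Finset.mem_Icc] at hk
          rw [Finset.mem_range]
          omega
        · intro k hk1 hk2
          rw [Finset.mem_range] at hk1
          rw [Finset.mem_Icc] at hk2
          rw [Rsym_coeff_eq_zero α n k (by omega), map_zero, zero_mul]
    _ = Rsym α n := by
        conv_rhs => rw [Polynomial.as_sum_range' (Rsym α n) (2 * n + 1)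
          (Nat.lt_succ_of_le (Rsym_natDegree_le α n))]
        apply Finset.sum_congr rfl
        intro k _
        rw [Polynomial.C_mul_X_pow_eq_monomial]
    _ = _ := rfl
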